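/- Let $n = 3$ with $\gamma^0 = \begin{pmatrix} I & 0 \\ 0 & -I \end{pmatrix}$, $\gamma^j = \begin{pmatrix} 0 & \sigma^j \\ -\sigma^j & 0 \end{pmatrix}$ for $j=1,2,3$, and $\gamma^5 = \begin{pmatrix} 0 & I \\ I & 0 \end{pmatrix}$. Then for every $\psi \in \mathbb{C}^4$ one has $\sum_{\mu=0}^{3} (\overline{\psi}\gamma^\mu\psi)\,\gamma_\mu\psi = (\overline{\psi}\psi)\,\psi - (\overline{\psi}\gamma^5\psi)\,\gamma^5\psi$. -/
import Mathlib


noncomputable section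

open Matrix

/-- `γ⁰ = [[I,0],[0,-I]]`. -/
def gamma0 : Matrix (Fin 4) (Fin 4) ℂ :=
  !![1, 0, 0, 0; 0, 1, 0, 0; 0, 0, -1, 0; 0, 0, 0, -1]

/-- `γ¹ = [[0,σ¹],[-σ¹,0]]`. -/
def gamma1 : Matrix (Fin 4) (Fin 4) ℂ :=
  !![0, 0, 0, 1; 0, 0, 1, 0; 0, -1, 0, 0; -1, 0, 0, 0]

/-- `γ² = [[0,σ²],[-σ²,0]]`. -/
def gamma2 : Matrix (Fin 4) (Fin 4) ℂ :=
  !![0, 0, 0, -Complex.I; 0, 0, Complex.I, 0;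
     0, Complex.I, 0, 0; -Complex.I, 0, 0, 0]

/-- `γ³ = [[0,σ³],[-σ³,0]]`. -/
def gamma3 : Matrix (Fin 4) (Fin 4) ℂ :=
  !![0, 0, 1, 0; 0, 0, 0, -1; -1, 0, 0, 0; 0, 1, 0, 0]

/-- `γ⁵ = [[0,I],[I,0]]`. -/
def gamma5 : Matrix (Fin 4) (Fin 4) ℂ :=
  !![0, 0, 1, 0; 0, 0, 0, 1; 1, 0, 0, 0; 0, 1, 0, 0]

/-- The gamma matrices with upper indices in dimension `n = 3`. -/
def gammaUp4 : Fin 4 → Matrix (Fin 4) (Fin 4) ℂ := ![gamma0, gamma1, gamma2, gamma3]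

/-- Gamma matrices with lowered indices, `γ₀ = γ⁰`, `γⱼ = -γʲ`
(Minkowski metric `diag(1,-1,-1,-1)`). -/
def gammaDown4 (μ : Fin 4) : Matrix (Fin 4) (Fin 4) ℂ :=
  if μ = 0 then gammaUp4 μ else -gammaUp4 μ

/-- Hermitian inner product `u† v` on `ℂ⁴`. -/
def cdot4 (u v : Fin 4 → ℂ) : ℂ := ∑ i, star (u i) * v i

/-- The Dirac bilinear `ψ̄ A ψ = ψ† γ⁰ A ψ`. -/
def diracBilin4 (ψ : Fin 4 → ℂ) (A : Matrix (Fin 4) (Fin 4) ℂ) : ℂ :=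
  cdot4 ψ ((gamma0 * A).mulVec ψ)


lemma g00 : gamma0 * gamma0 = 1 := by
  ext i j
  fin_cases i <;> fin_cases j <;>
    simp [gamma0, Matrix.mul_apply, Fin.sum_univ_four, Matrix.one_apply, Matrix.vecHead, Matrix.vecTail]

lemma g01 : gamma0 * gamma1 = !![0, 0, 0, 1; 0, 0, 1, 0; 0, 1, 0, 0; 1, 0, 0, 0] := by
  ext i j
  fin_cases i <;> fin_cases j <;>
    simp [gamma0, gamma1, Matrix.mul_apply, Fin.sum_univ_four, Matrix.vecHead, Matrix.vecTail]

lemma g02 : gamma0 * gamma2 = !![0, 0, 0, -Complex.I; 0, 0, Complex.I, 0;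
    0, -Complex.I, 0, 0; Complex.I, 0, 0, 0] := by
  ext i j
  fin_cases i <;> fin_cases j <;>
    simp [gamma0, gamma2, Matrix.mul_apply, Fin.sum_univ_four, Matrix.vecHead, Matrix.vecTail]

lemma g03 : gamma0 * gamma3 = !![0, 0, 1, 0; 0, 0, 0, -1; 1, 0, 0, 0; 0, -1, 0, 0] := by
  ext i j
  fin_cases i <;> fin_cases j <;>
    simp [gamma0, gamma3, Matrix.mul_apply, Fin.sum_univ_four, Matrix.vecHead, Matrix.vecTail]

lemma g05 : gamma0 * gamma5 = !![0, 0, 1, 0; 0, 0, 0, 1; -1, 0, 0, 0; 0, -1, 0, 0] := by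
  ext i j
  fin_cases i <;> fin_cases j <;>
    simp [gamma0, gamma5, Matrix.mul_apply, Fin.sum_univ_four, Matrix.vecHead, Matrix.vecTail]

lemma mulVec_explicit (A : Matrix (Fin 4) (Fin 4) ℂ) (ψ : Fin 4 → ℂ) (i : Fin 4) :
    A.mulVec ψ i = A i 0 * ψ 0 + A i 1 * ψ 1 + A i 2 * ψ 2 + A i 3 * ψ 3 := by
  simp [Matrix.mulVec, dotProduct, Fin.sum_univ_four]

lemma bilin_explicit (ψ : Fin 4 → ℂ) (A : Matrix (Fin 4) (Fin 4) ℂ) :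
    diracBilin4 ψ A = ∑ i, star (ψ i) * ((gamma0 * A).mulVec ψ i) := rfl

/-- Fierz-type identity in dimension `n = 3`:
`∑_μ (ψ̄ γ^μ ψ) γ_μ ψ = (ψ̄ ψ) ψ - (ψ̄ γ⁵ ψ) γ⁵ ψ`. -/
theorem fierz_identity_dim3 (ψ : Fin 4 → ℂ) :
    ∑ μ : Fin 4, diracBilin4 ψ (gammaUp4 μ) • (gammaDown4 μ).mulVec ψ
      = diracBilin4 ψ 1 • ψ - diracBilin4 ψ gamma5 • gamma5.mulVec ψ := by
  have h0 : diracBilin4 ψ (gammaUp4 0) = star (ψ 0) * ψ 0 + star (ψ 1) * ψ 1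
      + star (ψ 2) * ψ 2 + star (ψ 3) * ψ 3 := by
    show diracBilin4 ψ gamma0 = _
    rw [bilin_explicit, g00]
    simp [Fin.sum_univ_four, mulVec_explicit, Matrix.vecHead, Matrix.vecTail, Function.comp, Matrix.one_apply]
  have h1 : diracBilin4 ψ (gammaUp4 1) = star (ψ 0) * ψ 3 + star (ψ 1) * ψ 2
      + star (ψ 2) * ψ 1 + star (ψ 3) * ψ 0 := by
    show diracBilin4 ψ gamma1 = _
    rw [bilin_explicit, g01]
    simp [Fin.sum_univ_four, mulVec_explicit, Matrix.vecHead, Matrix.vecTail, Function.comp]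
  have h2 : diracBilin4 ψ (gammaUp4 2) = -Complex.I * star (ψ 0) * ψ 3
      + Complex.I * star (ψ 1) * ψ 2 - Complex.I * star (ψ 2) * ψ 1
      + Complex.I * star (ψ 3) * ψ 0 := by
    show diracBilin4 ψ gamma2 = _
    rw [bilin_explicit, g02]
    simp [Fin.sum_univ_four, mulVec_explicit, Matrix.vecHead, Matrix.vecTail, Function.comp]
    ring
  have h3 : diracBilin4 ψ (gammaUp4 3) = star (ψ 0) * ψ 2 - star (ψ 1) * ψ 3
      + star (ψ 2) * ψ 0 - star (ψ 3) * ψ 1 := by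
    show diracBilin4 ψ gamma3 = _
    rw [bilin_explicit, g03]
    simp [Fin.sum_univ_four, mulVec_explicit, Matrix.vecHead, Matrix.vecTail, Function.comp]
    ring
  have hS : diracBilin4 ψ 1 = star (ψ 0) * ψ 0 + star (ψ 1) * ψ 1
      - star (ψ 2) * ψ 2 - star (ψ 3) * ψ 3 := by
    rw [bilin_explicit, mul_one]
    simp [Fin.sum_univ_four, mulVec_explicit, Matrix.vecHead, Matrix.vecTail, Function.comp, gamma0]
    ring
  have hP : diracBilin4 ψ gamma5 = star (ψ 0) * ψ 2 + star (ψ 1) * ψ 3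
      - star (ψ 2) * ψ 0 - star (ψ 3) * ψ 1 := by
    rw [bilin_explicit, g05]
    simp [Fin.sum_univ_four, mulVec_explicit, Matrix.vecHead, Matrix.vecTail, Function.comp]
    ring
  have hd0 : gammaDown4 0 = gamma0 := rfl
  have hd1 : gammaDown4 1 = -gamma1 := rfl
  have hd2 : gammaDown4 2 = -gamma2 := rfl
  have hd3 : gammaDown4 3 = -gamma3 := rfl
  funext i
  simp only [Fin.sum_univ_four, Pi.add_apply, Pi.smul_apply, Pi.sub_apply, smul_eq_mul,
    h0, h1, h2, h3, hS, hP, hd0, hd1, hd2, hd3, Matrix.neg_mulVec, Pi.neg_apply,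
    mulVec_explicit]
  fin_cases i <;>
  · simp [gamma0, gamma1, gamma2, gamma3, gamma5, Matrix.vecHead, Matrix.vecTail]
    ring_nf
    simp only [Complex.I_sq]
    ring
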